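/- Let λ, μ ⊆ l×k and let d be the side of the largest square in λ ∩ rotate(μ). Let λ̄̃ be obtained from λ by deleting its top d rows and leftmost d columns: (λ̄̃)_i = max(λ_{i+d} − d, 0). Then λ̄̃ ∩ rotate(μ) = ∅ inside the l×k rectangle; i.e., (λ̄̃)_i + μ_{l+1−i} ≤ k for all 1 ≤ i ≤ l. -/
import Mathlib


open YoungDiagram

namespace QCGrass

/-- The rectangular Young diagram with `m` rows of length `M`. -/
def rect (m M : ℕ) : YoungDiagram :=
  ⟨Finset.range m ×ˢ Finset.range M, by
    intro a b hba ha
    simp only [Finset.coe_product, Set.mem_prod, Finset.mem_coe, Finset.mem_range] at *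
    exact ⟨lt_of_le_of_lt hba.1 ha.1, lt_of_le_of_lt hba.2 ha.2⟩⟩

/-- The cells of the skew shape `nu / lam`. -/
def skewCells (lam nu : YoungDiagram) : Finset (ℕ × ℕ) := nu.cells \ lam.cells

/-- `T` is a Littlewood–Richardson skew tableau of shape `nu / lam` and content `mu`:
entries (valued in `{1, 2, …}`, with `0` meaning "no entry") are supported exactly on the
skew shape `nu / lam`, weakly increase along rows, strictly increase down columns, the number
of entries equal to `r + 1` is the `r`-th row length of `mu`, and the reverse reading word
(rows read right to left, top to bottom) is a lattice word. -/
def IsLRTableau (lam mu nu : YoungDiagram) (T : ℕ × ℕ → ℕ) : Prop :=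
  lam ≤ nu ∧
  (∀ p : ℕ × ℕ, 1 ≤ T p ↔ p ∈ skewCells lam nu) ∧
  (∀ i j j' : ℕ, j ≤ j' → (i, j) ∈ skewCells lam nu → (i, j') ∈ skewCells lam nu →
      T (i, j) ≤ T (i, j')) ∧
  (∀ i i' j : ℕ, i < i' → (i, j) ∈ skewCells lam nu → (i', j) ∈ skewCells lam nu →
      T (i, j) < T (i', j)) ∧
  (∀ r : ℕ, ((skewCells lam nu).filter (fun p => T p = r + 1)).card = mu.rowLen r) ∧
  (∀ i j r : ℕ,
      ((skewCells lam nu).filter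
        (fun p => T p = r + 2 ∧ (p.1 < i ∨ (p.1 = i ∧ j ≤ p.2)))).card ≤
      ((skewCells lam nu).filter
        (fun p => T p = r + 1 ∧ (p.1 < i ∨ (p.1 = i ∧ j ≤ p.2)))).card)

/-- The Littlewood–Richardson coefficient `c^nu_{lam, mu}`, defined as the number of
Littlewood–Richardson skew tableaux of shape `nu / lam` and content `mu`. -/
noncomputable def lrCoeff (lam mu nu : YoungDiagram) : ℕ :=
  Nat.card {T : ℕ × ℕ → ℕ // IsLRTableau lam mu nu T}

/-- The set of boxes (in `0`-indexed matrix coordinates) of `mu` rotated 180 degrees and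
placed in the lower-right corner of the `l × k` rectangle. -/
def rotSet (l k : ℕ) (mu : YoungDiagram) : Set (ℕ × ℕ) :=
  {p | p.1 < l ∧ p.2 < k ∧ k - mu.rowLen (l - 1 - p.1) ≤ p.2}

/-- Two boxes are adjacent when they share an edge. -/
def Adjacent (p q : ℕ × ℕ) : Prop :=
  (p.1 = q.1 ∧ (p.2 = q.2 + 1 ∨ q.2 = p.2 + 1)) ∨
  (p.2 = q.2 ∧ (p.1 = q.1 + 1 ∨ q.1 = p.1 + 1))

/-- `mu` is obtained from `lam` by removing a legal `n`-rim hook: `mu ⊆ lam` (so the removal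
leaves a Young diagram), the removed set has `n` boxes, is edge-connected, and contains
no `2 × 2` square. -/
def IsRimHookRemoval (n : ℕ) (lam mu : YoungDiagram) : Prop :=
  mu ≤ lam ∧ (skewCells mu lam).card = n ∧
  (∀ p ∈ skewCells mu lam, ∀ q ∈ skewCells mu lam,
    Relation.ReflTransGen
      (fun a b => a ∈ skewCells mu lam ∧ b ∈ skewCells mu lam ∧ Adjacent a b) p q) ∧
  ¬ ∃ i j : ℕ, (i, j) ∈ skewCells mu lam ∧ (i + 1, j) ∈ skewCells mu lam ∧
      (i, j + 1) ∈ skewCells mu lam ∧ (i + 1, j + 1) ∈ skewCells mu lam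

/-- One legal `n`-rim hook removal step. -/
def RimStep (n : ℕ) (lam mu : YoungDiagram) : Prop := IsRimHookRemoval n lam mu

/-- A diagram is an `n`-core when no legal `n`-rim hook can be removed from it. -/
def IsCore (n : ℕ) (t : YoungDiagram) : Prop := ¬ ∃ s, RimStep n t s

/-- `ReachesIn n m a b` : `b` is obtained from `a` by `m` successive legal `n`-rim hook
removals. -/
def ReachesIn (n : ℕ) : ℕ → YoungDiagram → YoungDiagram → Prop
  | 0 => fun a b => a = b
  | m + 1 => fun a b => ∃ c, RimStep n a c ∧ ReachesIn n m c b

/-- The width (number of occupied columns) of the strip removed in passing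
from `lam` to `mu`. -/
def hookWidth (lam mu : YoungDiagram) : ℕ := ((skewCells mu lam).image Prod.snd).card

/-- The height (number of occupied rows) of the strip removed in passing
from `lam` to `mu`. -/
def hookHeight (lam mu : YoungDiagram) : ℕ := ((skewCells mu lam).image Prod.fst).card

/-- `ReachesInSign n k m s a b` : `b` is obtained from `a` by `m` successive legal `n`-rim
hook removals, and `s = ∏ (-1)^(k - width(R_i))` over the removed hooks `R_i`. -/
def ReachesInSign (n k : ℕ) : ℕ → ℤ → YoungDiagram → YoungDiagram → Prop
  | 0 => fun s a b => a = b ∧ s = 1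
  | m + 1 => fun s a b => ∃ c s', RimStep n a c ∧ ReachesInSign n k m s' c b ∧
      s = (-1) ^ (k - hookWidth a c) * s'

/-- `diagLen lam` is the number of diagonal boxes of `lam`, i.e. the side length of the
largest square contained in `lam`. -/
def diagLen (lam : YoungDiagram) : ℕ := (lam.cells.filter fun p => p.1 = p.2).card

/-- A `d × d` square of boxes fits inside `lam ∩ rotate(mu)` within the `l × k` rectangle. -/
def SquareFits (l k : ℕ) (lam mu : YoungDiagram) (d : ℕ) : Prop :=
  ∃ i j : ℕ, ∀ i' j' : ℕ, i ≤ i' → i' < i + d → j ≤ j' → j' < j + d →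
    (i', j') ∈ lam.cells ∧ (i', j') ∈ rotSet l k mu

/-- The triple product `σ_lam · σ_mu · σ_nu` is nonzero in `H^*(Gr(l, l+k))`: some `rho ⊆ l × k`
has `c^rho_{lam,mu} ≠ 0` and `rho` is disjoint from `rotate(nu)`. -/
def TripleNonzero (l k : ℕ) (lam mu nu : YoungDiagram) : Prop :=
  ∃ rho, rho ≤ rect l k ∧ lrCoeff lam mu rho ≠ 0 ∧
    ∀ i, i < l → rho.rowLen i + nu.rowLen (l - 1 - i) ≤ k


lemma mem_rect {l k : ℕ} {p : ℕ × ℕ} : p ∈ rect l k ↔ p.1 < l ∧ p.2 < k := by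
  rw [← YoungDiagram.mem_cells]
  simp [rect, Finset.mem_product]

lemma rowLen_le_of_le_rect {l k : ℕ} {lam : YoungDiagram} (h : lam ≤ rect l k) (i : ℕ) :
    lam.rowLen i ≤ k := by
  by_contra hk
  push_neg at hk
  have : (i, k) ∈ lam := YoungDiagram.mem_iff_lt_rowLen.mpr hk
  have := mem_rect.mp (YoungDiagram.cells_subset_iff.mpr h this)
  omega

/-- If `d` is the side of the largest square in `lam ∩ rotate(mu)` inside
`l × k`, then the partition obtained from `lam` by deleting its top `d` rows and leftmost
`d` columns is disjoint from `rotate(mu)`: `max(lam_{i+d} - d, 0) + mu_{l+1-i} ≤ k` for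
all `1 ≤ i ≤ l` (0-indexed below). -/
theorem removed_square_disjoint (l k d : ℕ) (lam mu : YoungDiagram)
    (hlam : lam ≤ rect l k) (hmu : mu ≤ rect l k)
    (hd : SquareFits l k lam mu d) (hd' : ¬ SquareFits l k lam mu (d + 1)) :
    ∀ i, i < l → (lam.rowLen (i + d) - d) + mu.rowLen (l - 1 - i) ≤ k := by
  intro i hi
  by_contra hc
  push_neg at hc
  apply hd'
  have ha : lam.rowLen (i + d) ≤ k := rowLen_le_of_le_rect hlam _
  have hb : mu.rowLen (l - 1 - i) ≤ k := rowLen_le_of_le_rect hmu _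
  have hda : d < lam.rowLen (i + d) := by omega
  have hid : i + d < l := by
    have hm : (i + d, 0) ∈ lam := YoungDiagram.mem_iff_lt_rowLen.mpr (by omega)
    have := mem_rect.mp (YoungDiagram.cells_subset_iff.mpr hlam hm)
    exact this.1
  refine ⟨i, k - mu.rowLen (l - 1 - i), ?_⟩
  intro i' j' hii' hi'd hjj' hj'd
  have hi'l : i' < l := by omega
  have hrow : lam.rowLen (i + d) ≤ lam.rowLen i' := lam.rowLen_anti _ _ (by omega)
  have hj'r : j' < lam.rowLen (i + d) := by omega
  have hmono : mu.rowLen (l - 1 - i) ≤ mu.rowLen (l - 1 - i') :=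
    mu.rowLen_anti _ _ (by omega)
  refine ⟨?_, hi'l, by omega, ?_⟩
  · exact (YoungDiagram.mem_cells _).mpr (YoungDiagram.mem_iff_lt_rowLen.mpr (by omega))
  · show k - mu.rowLen (l - 1 - i') ≤ j'
    omega

end QCGrass
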